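/- The fibers-to-angles and angles-to-fibers maps are mutually inverse for α: if f is constructed from the orthonormal frame (e_l, e_n, e_t) and angles α ∈ (−π, π], γ ∈ (−π/2, π/2) via f = cos α cos γ e_l + sin α cos γ e_n + sin γ e_t, then the projection f_LN = f − (f·e_t)e_t is nonzero and atan2(e_n · f_LN/‖f_LN‖, e_l · f_LN/‖f_LN‖) = α. -/

import Mathlib

open Real

/-- The two-argument arctangent with range `(-π, π]`. -/
noncomputable def atan2 (y x : ℝ) : ℝ := Complex.arg ⟨x, y⟩

/-- Fibers-to-angles inverts angles-to-fibers for `α`: if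
`f = cos α cos γ • e_l + sin α cos γ • e_n + sin γ • e_t` with `(e_l, e_n, e_t)`
orthonormal, `α ∈ (-π, π]`, `γ ∈ (-π/2, π/2)`, then the projection
`f_LN = f - (f·e_t) e_t` is nonzero and
`atan2(e_n · f_LN/‖f_LN‖, e_l · f_LN/‖f_LN‖) = α`. -/
theorem fibers_to_angles_recovers_alpha
    (el en et : EuclideanSpace ℝ (Fin 3)) (hON : Orthonormal ℝ ![el, en, et])
    (α γ : ℝ) (hα : α ∈ Set.Ioc (-π) π) (hγ : γ ∈ Set.Ioo (-(π / 2)) (π / 2))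
    (f : EuclideanSpace ℝ (Fin 3))
    (hf : f = (Real.cos α * Real.cos γ) • el + (Real.sin α * Real.cos γ) • en +
      Real.sin γ • et)
    (fLN : EuclideanSpace ℝ (Fin 3))
    (hfLN : fLN = f - (inner ℝ f et : ℝ) • et) :
    fLN ≠ 0 ∧
      atan2 (inner ℝ en (‖fLN‖⁻¹ • fLN) : ℝ) (inner ℝ el (‖fLN‖⁻¹ • fLN) : ℝ) = α := by
  rw [orthonormal_iff_ite] at hON
  have h00 : (inner ℝ el el : ℝ) = 1 := by simpa using hON 0 0
  have h11 : (inner ℝ en en : ℝ) = 1 := by simpa using hON 1 1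
  have h22 : (inner ℝ et et : ℝ) = 1 := by simpa using hON 2 2
  have h01 : (inner ℝ el en : ℝ) = 0 := by simpa using hON 0 1
  have h10 : (inner ℝ en el : ℝ) = 0 := by simpa using hON 1 0
  have h02 : (inner ℝ el et : ℝ) = 0 := by simpa using hON 0 2
  have h20 : (inner ℝ et el : ℝ) = 0 := by simpa using hON 2 0
  have h12 : (inner ℝ en et : ℝ) = 0 := by simpa using hON 1 2
  have h21 : (inner ℝ et en : ℝ) = 0 := by simpa using hON 2 1
  have hcγ : 0 < Real.cos γ := Real.cos_pos_of_mem_Ioo (by simpa using hγ)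
  have hft : (inner ℝ f et : ℝ) = Real.sin γ := by
    simp only [hf, inner_add_left, real_inner_smul_left, h02, h12, h22]
    ring
  have hLN : fLN = (Real.cos α * Real.cos γ) • el + (Real.sin α * Real.cos γ) • en := by
    rw [hfLN, hft, hf]; abel
  have hinner : (inner ℝ fLN fLN : ℝ) = Real.cos γ ^ 2 := by
    simp only [hLN, inner_add_left, inner_add_right, real_inner_smul_left,
      real_inner_smul_right, h00, h11, h01, h10]
    have := Real.sin_sq_add_cos_sq α
    nlinarith [this]
  have hnorm : ‖fLN‖ = Real.cos γ := by
    have h2 : ‖fLN‖ ^ 2 = Real.cos γ ^ 2 := by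
      rw [← real_inner_self_eq_norm_sq, hinner]
    calc ‖fLN‖ = Real.sqrt (‖fLN‖ ^ 2) := (Real.sqrt_sq (norm_nonneg _)).symm
      _ = Real.cos γ := by rw [h2, Real.sqrt_sq hcγ.le]
  have hne : fLN ≠ 0 := by
    intro h
    rw [h, norm_zero] at hnorm
    exact absurd hnorm.symm (ne_of_gt hcγ)
  refine ⟨hne, ?_⟩
  have hx : (inner ℝ el (‖fLN‖⁻¹ • fLN) : ℝ) = Real.cos α := by
    rw [real_inner_smul_right, hnorm, hLN]
    simp only [inner_add_right, real_inner_smul_right, h00, h01]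
    field_simp
    ring
  have hy : (inner ℝ en (‖fLN‖⁻¹ • fLN) : ℝ) = Real.sin α := by
    rw [real_inner_smul_right, hnorm, hLN]
    simp only [inner_add_right, real_inner_smul_right, h10, h11]
    field_simp
    ring
  rw [hx, hy, atan2]
  have : (⟨Real.cos α, Real.sin α⟩ : ℂ) = Complex.cos α + Complex.sin α * Complex.I := by
    apply Complex.ext <;> simp [Complex.cos_ofReal_re, Complex.sin_ofReal_re]
  rw [this]
  exact Complex.arg_cos_add_sin_mul_I hα
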